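/- Let A be an annihilator nilpotent skew brace. Then T₊(A) is an ideal of A, and the quotient skew brace A/T₊(A) has no nonzero element of finite additive order. -/

import Mathlib

set_option linter.unusedSectionVars false
set_option maxHeartbeats 1000000


/-- A skew brace: a type with two group structures `(B,+)` and `(B,∘)`
(the multiplicative group is written with `*`) sharing the same underlying set,
such that `a ∘ (b + c) = a ∘ b - a + a ∘ c`. -/
class SkewBrace (B : Type*) extends AddGroup B, Group B where
  circ_add : ∀ a b c : B, a * (b + c) = a * b - a + a * c

namespace SkewBrace

variable {B : Type*} [SkewBrace B]

/-- `lam a b = -a + a ∘ b`, i.e. `λ_a(b)`. -/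
def lam (a b : B) : B := -a + a * b

/-- `a * b` (the star operation) `= λ_a(b) - b = -a + a ∘ b - b`. -/
def starOp (a b : B) : B := -a + a * b - b

/-- `X * Y` : the additive subgroup generated by all `x * y`, `x ∈ X`, `y ∈ Y`,
regarded as a set. -/
def starSpan (X Y : Set B) : Set B :=
  (AddSubgroup.closure {z : B | ∃ x ∈ X, ∃ y ∈ Y, z = starOp x y} : AddSubgroup B)

/-- `[X,Y]₊` : the additive subgroup generated by all additive commutators
`x + y - x - y`, `x ∈ X`, `y ∈ Y`, regarded as a set. -/
def addCommSpan (X Y : Set B) : Set B :=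
  (AddSubgroup.closure {z : B | ∃ x ∈ X, ∃ y ∈ Y, z = x + y - x - y} : AddSubgroup B)

/-- A sub skew brace: a subset containing `0` and closed under both group
operations and both inverses. -/
def IsSubSkewBrace (S : Set B) : Prop :=
  0 ∈ S ∧ (∀ a ∈ S, ∀ b ∈ S, a + b ∈ S) ∧ (∀ a ∈ S, -a ∈ S) ∧
    (∀ a ∈ S, ∀ b ∈ S, a * b ∈ S) ∧ (∀ a ∈ S, a⁻¹ ∈ S)

/-- An ideal: a sub skew brace that is normal in `(B,+)` and in `(B,∘)` and
invariant under all `λ_a`. -/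
def IsIdeal (S : Set B) : Prop :=
  IsSubSkewBrace S ∧ (∀ a : B, ∀ i ∈ S, a + i - a ∈ S) ∧
    (∀ a : B, ∀ i ∈ S, a * i * a⁻¹ ∈ S) ∧ (∀ a : B, ∀ i ∈ S, lam a i ∈ S)

/-- The annihilator `Ann(B) = {x | x∘a = a∘x = x+a = a+x for all a}`. -/
def annSet (B : Type*) [SkewBrace B] : Set B :=
  {x | ∀ a : B, x * a = a * x ∧ x * a = x + a ∧ x + a = a + x}

/-- The annihilator series: `Ann₀(B) = 0` and `Ann_{n+1}(B)` is the preimage of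
`Ann(B/Annₙ(B))` under the quotient map; membership is expressed via coset
equalities modulo `Annₙ(B)`. -/
def annSeries (B : Type*) [SkewBrace B] : ℕ → Set B
  | 0 => {0}
  | n + 1 => {x | ∀ a : B,
      x * a - a * x ∈ annSeries B n ∧
      x * a - (x + a) ∈ annSeries B n ∧
      (x + a) - (a + x) ∈ annSeries B n}

/-- `B` is annihilator nilpotent if `Annₙ(B) = B` for some `n`. -/
def AnnNilpotent (B : Type*) [SkewBrace B] : Prop :=
  ∃ n : ℕ, annSeries B n = Set.univ

/-- `leftPow B n` is `B^{n+1}`: `B¹ = B`, `B^{n+1} = B * Bⁿ`. -/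
def leftPow (B : Type*) [SkewBrace B] : ℕ → Set B
  | 0 => Set.univ
  | n + 1 => starSpan Set.univ (leftPow B n)

/-- `rightPow B n` is `B⁽ⁿ⁺¹⁾`: `B⁽¹⁾ = B`, `B⁽ⁿ⁺¹⁾ = B⁽ⁿ⁾ * B`. -/
def rightPow (B : Type*) [SkewBrace B] : ℕ → Set B
  | 0 => Set.univ
  | n + 1 => starSpan (rightPow B n) Set.univ

/-- `B` is left nilpotent if `Bⁿ = 0` for some `n ≥ 1`. -/
def LeftNilpotent (B : Type*) [SkewBrace B] : Prop :=
  ∃ n : ℕ, leftPow B n = ({0} : Set B)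

/-- `B` is right nilpotent if `B⁽ⁿ⁾ = 0` for some `n ≥ 1`. -/
def RightNilpotent (B : Type*) [SkewBrace B] : Prop :=
  ∃ n : ℕ, rightPow B n = ({0} : Set B)

/-- `strongPow B n` is `B^[n+1]`: `B^[1] = B`, and `B^[n+1]` is the additive
subgroup generated by `⋃_{i=1}^{n} B^[i] * B^[n+1-i]`. -/
def strongPow (B : Type*) [SkewBrace B] : ℕ → Set B
  | 0 => Set.univ
  | n + 1 => (AddSubgroup.closure (⋃ j : Fin (n + 1),
      {z : B | ∃ x ∈ strongPow B j.1, ∃ y ∈ strongPow B (n - j.1), z = starOp x y}) :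
        AddSubgroup B)
  decreasing_by
  · exact j.isLt
  · omega

/-- `B` is strongly nilpotent if `B^[n] = 0` for some `n ≥ 1`. -/
def StronglyNilpotent (B : Type*) [SkewBrace B] : Prop :=
  ∃ n : ℕ, strongPow B n = ({0} : Set B)

/-- `gammaAux B n` is `Γ_[n+1](B)`: `Γ_[1](B) = B` and, for `n ≥ 2`, `Γ_[n](B)` is
the additive subgroup generated by the sets `Γ_[i](B) * Γ_[n-i](B)` and
`[Γ_[i](B), Γ_[n-i](B)]₊` for `1 ≤ i ≤ n-1`. -/
def gammaAux (B : Type*) [SkewBrace B] : ℕ → Set B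
  | 0 => Set.univ
  | n + 1 => (AddSubgroup.closure (⋃ j : Fin (n + 1),
      {z : B | ∃ x ∈ gammaAux B j.1, ∃ y ∈ gammaAux B (n - j.1),
        z = starOp x y ∨ z = x + y - x - y}) : AddSubgroup B)
  decreasing_by
  · exact j.isLt
  · omega

/-- `Γ_[n](B)` for `n ≥ 1` (one-based indexing as in the paper). -/
def gammaBr (B : Type*) [SkewBrace B] (n : ℕ) : Set B := gammaAux B (n - 1)

/-- `B` is finitely generated as a skew brace: there is a finite subset whose
smallest containing sub skew brace is `B` itself. -/
def SBFinitelyGenerated (B : Type*) [SkewBrace B] : Prop :=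
  ∃ S : Set B, S.Finite ∧ ∀ T : Set B, IsSubSkewBrace T → S ⊆ T → T = Set.univ

/-- `B` satisfies the ascending chain condition on sub skew braces. -/
def ACCSubSkewBrace (B : Type*) [SkewBrace B] : Prop :=
  ∀ f : ℕ → Set B, (∀ n, IsSubSkewBrace (f n)) → (∀ n, f n ⊆ f (n + 1)) →
    ∃ N : ℕ, ∀ n, N ≤ n → f n = f N




lemma one_eq_zero : (1 : B) = 0 := by
  have h := circ_add (1 : B) 0 0
  simp only [add_zero, one_mul] at h
  have : (0 : B) = -1 + 0 := by
    conv_lhs => rw [h]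
    simp [sub_eq_add_neg, add_assoc]
  simpa using this.symm

lemma zero_mul'' (a : B) : (0 : B) * a = a := by rw [← one_eq_zero, one_mul]

lemma mul_zero'' (a : B) : a * (0 : B) = a := by rw [← one_eq_zero, mul_one]

lemma lam_add (a b c : B) : lam a (b + c) = lam a b + lam a c := by
  simp only [lam, circ_add, sub_eq_add_neg, add_assoc]

def lamHom (a : B) : B →+ B := AddMonoidHom.mk' (lam a) (lam_add a)

lemma add_lam (a b : B) : a + lam a b = a * b := by
  simp [lam]

lemma lam_zero (a : B) : lam a (0 : B) = 0 := by simp [lam, mul_zero'']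

lemma mul_neg'' (a b : B) : a * (-b) = a - a * b + a := by
  have h := circ_add a b (-b)
  simp only [add_neg_cancel, mul_zero''] at h
  have := h.symm
  rw [sub_eq_add_neg, add_assoc] at this
  -- this : a * b + (-a + a * (-b)) = a
  have h2 : -a + a * (-b) = -(a*b) + a := by
    have h3 := congrArg (fun z => -(a*b) + z) this
    simpa using h3
  calc a * (-b) = a + (-a + a * (-b)) := by simp
    _ = a + (-(a*b) + a) := by rw [h2]
    _ = a - a * b + a := by simp [sub_eq_add_neg, add_assoc]

lemma lam_mul (a b c : B) : lam (a * b) c = lam a (lam b c) := by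
  simp only [lam, circ_add, mul_neg'']
  simp [sub_eq_add_neg, add_assoc, mul_assoc]

lemma lam_one (c : B) : lam (1 : B) c = c := by simp [lam, one_eq_zero, zero_mul'']

lemma lam_neg (a b : B) : lam a (-b) = - lam a b := by
  have h := lam_add a b (-b)
  rw [add_neg_cancel, lam_zero] at h
  exact (neg_eq_of_add_eq_zero_right h.symm).symm

lemma lam_sub (a b c : B) : lam a (b - c) = lam a b - lam a c := by
  rw [sub_eq_add_neg, lam_add, lam_neg, ← sub_eq_add_neg]

lemma lam_lam_inv (a c : B) : lam a (lam a⁻¹ c) = c := by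
  rw [← lam_mul, mul_inv_cancel, lam_one]

lemma star_eq (a b : B) : starOp a b = lam a b - b := rfl

lemma lam_eq_star (a b : B) : lam a b = starOp a b + b := by simp [star_eq]

lemma add_eq_mul_lam (u i : B) : u + i = u * (lam u⁻¹ i) := by
  rw [← add_lam u (lam u⁻¹ i), lam_lam_inv]

lemma mul_eq_add_star (x w : B) : x * w = x + (starOp x w + w) := by
  rw [← add_lam, lam_eq_star]

lemma star_mul_left (u v b : B) : starOp (u * v) b = lam u (starOp v b) + starOp u b := by
  have h1 : lam u (starOp v b) = lam u (lam v b) - lam u b := by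
    rw [star_eq, lam_sub]
  rw [h1, star_eq, star_eq, ← lam_mul]
  simp [sub_eq_add_neg, add_assoc]

lemma star_one_left (b : B) : starOp (1 : B) b = 0 := by
  simp [starOp, one_mul, sub_eq_add_neg, add_assoc, one_eq_zero, zero_mul'']

lemma lam_inv_self (a : B) : lam a a⁻¹ = -a := by
  simp [lam, mul_inv_cancel, one_eq_zero]

lemma inv_eq_lam (a : B) : a⁻¹ = lam a⁻¹ (-a) := by
  rw [lam_neg]
  have : lam a⁻¹ a = -a⁻¹ := by simp [lam, inv_mul_cancel, one_eq_zero]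
  rw [this, neg_neg]

lemma conj_circ (a i : B) : a * i * a⁻¹ = a + (lam a i + lam a (starOp i a⁻¹)) - a := by
  have h2 : lam a (i * a⁻¹) = lam a i + (lam a (starOp i a⁻¹) + -a) := by
    rw [← add_lam i a⁻¹, lam_add, lam_eq_star i a⁻¹, lam_add, lam_inv_self]
  rw [mul_assoc, ← add_lam a (i * a⁻¹), h2]
  simp [sub_eq_add_neg, add_assoc]
structure NIdeal (I : Set B) : Prop where
  zero : (0 : B) ∈ I
  add : ∀ {u v : B}, u ∈ I → v ∈ I → u + v ∈ I
  neg : ∀ {u : B}, u ∈ I → -u ∈ I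
  conj : ∀ (a : B) {u : B}, u ∈ I → a + u - a ∈ I

namespace NIdeal

variable {I : Set B} (h : NIdeal I)
include h

lemma conj' (a : B) {u : B} (hu : u ∈ I) : -a + u + a ∈ I := by
  have := h.conj (-a) hu
  simpa [sub_eq_add_neg] using this

lemma sub {u v : B} (hu : u ∈ I) (hv : v ∈ I) : u - v ∈ I :=
  sub_eq_add_neg u v ▸ h.add hu (h.neg hv)

lemma symm {u v : B} (huv : u - v ∈ I) : v - u ∈ I := by
  simpa [neg_sub] using h.neg huv

lemma trans {u v w : B} (h1 : u - v ∈ I) (h2 : v - w ∈ I) : u - w ∈ I := by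
  simpa [sub_add_sub_cancel] using h.add h1 h2

lemma addL (c : B) {u v : B} (huv : u - v ∈ I) : (c + u) - (c + v) ∈ I := by
  have e : (c + u) - (c + v) = c + (u - v) - c := by
    simp [sub_eq_add_neg, add_assoc]
  rw [e]; exact h.conj c huv

lemma addR (c : B) {u v : B} (huv : u - v ∈ I) : (u + c) - (v + c) ∈ I := by
  have e : (u + c) - (v + c) = u - v := by
    simp [sub_eq_add_neg, add_assoc]
  rw [e]; exact huv

lemma negc {u v : B} (huv : u - v ∈ I) : (-u) - (-v) ∈ I := by
  have h1 := h.conj' u (h.symm huv)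
  have e : -u + (v - u) + u = (-u) - (-v) := by
    simp [sub_eq_add_neg, add_assoc]
  rw [e] at h1; exact h1

lemma mem_of_sub_zero {u : B} (hu : u - 0 ∈ I) : u ∈ I := by simpa using hu

lemma of_eq_add {u v w : B} (hw : w ∈ I) (e : u = w + v) : u - v ∈ I := by
  rw [e]; simpa [sub_eq_add_neg, add_assoc] using hw

end NIdeal

lemma mem_annSeries_zero {x : B} : x ∈ annSeries B 0 ↔ x = 0 := by
  rw [annSeries]; exact Set.mem_singleton_iff

lemma mem_annSeries_succ {x : B} {k : ℕ} : x ∈ annSeries B (k+1) ↔ ∀ a : B,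
    x * a - a * x ∈ annSeries B k ∧
    x * a - (x + a) ∈ annSeries B k ∧
    (x + a) - (a + x) ∈ annSeries B k := by
  rw [annSeries]; exact Iff.rfl

section Cross

variable {k : ℕ} (hI : NIdeal (annSeries B k))

-- conditions of an element of level k+1
lemma cond1 {x : B} (hx : x ∈ annSeries B (k+1)) (a : B) : x * a - a * x ∈ annSeries B k :=
  ((mem_annSeries_succ.mp hx) a).1

lemma cond2 {x : B} (hx : x ∈ annSeries B (k+1)) (a : B) : x * a - (x + a) ∈ annSeries B k :=
  ((mem_annSeries_succ.mp hx) a).2.1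

lemma cond3 {x : B} (hx : x ∈ annSeries B (k+1)) (a : B) : (x + a) - (a + x) ∈ annSeries B k :=
  ((mem_annSeries_succ.mp hx) a).2.2

include hI

/-- additive commutator of a level-(k+1) element with anything is in level k -/
lemma comm_mem {x : B} (hx : x ∈ annSeries B (k+1)) (a : B) :
    x + a - x - a ∈ annSeries B k := by
  have h := cond3 hx a
  have e : (x + a) - (a + x) = x + a - x - a := by
    simp [sub_eq_add_neg, add_assoc]
  rwa [e] at h

/-- commutator in the other order -/
lemma comm_mem' {x : B} (hx : x ∈ annSeries B (k+1)) (a : B) :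
    -x + a + x - a ∈ annSeries B k := by
  have h1 := hI.conj' x (comm_mem hI hx a)
  have e : -x + (x + a - x - a) + x = -(-x + a + x - a) := by
    simp [sub_eq_add_neg, add_assoc]
  rw [e] at h1
  simpa using hI.neg h1

/-- L1 : `x ⋆ b ∈ Ann k` for `x ∈ Ann (k+1)` -/
lemma starL {x : B} (hx : x ∈ annSeries B (k+1)) (b : B) : starOp x b ∈ annSeries B k := by
  have h1 := cond2 hx b
  -- x*b - (x+b) ∈ I ; starOp x b = -x + (x*b - (x+b)) + x
  have e : starOp x b = -x + (x * b - (x + b)) + x := by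
    simp [starOp, sub_eq_add_neg, add_assoc]
  rw [e]; exact hI.conj' x h1

/-- L2 : `w ⋆ c ∈ Ann k` for `c ∈ Ann (k+1)` -/
lemma starR {c : B} (hc : c ∈ annSeries B (k+1)) (w : B) : starOp w c ∈ annSeries B k := by
  have h1 : w * c - (c + w) ∈ annSeries B k := by
    have ha := hI.symm (cond1 hc w)   -- w*c - c*w
    have hb := cond2 hc w             -- c*w - (c+w)
    exact hI.trans ha hb
  -- starOp w c = -w + (w*c) - c ; w*c = (w*c - (c+w)) + (c+w)
  have e : starOp w c = (-w + (w * c - (c + w)) + w) + (-w + c + w - c) := by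
    simp [starOp, sub_eq_add_neg, add_assoc]
  rw [e]
  have h2 := hI.neg (comm_mem hI hc (-w))
  have e2 : -(c + -w - c - -w) = -w + c + w - c := by
    simp [sub_eq_add_neg, add_assoc]
  rw [e2] at h2
  exact hI.add (hI.conj' w h1) h2

end Cross

structure AnnGood (B : Type*) [SkewBrace B] (k : ℕ) : Prop where
  ni : NIdeal (annSeries B k)
  lam_mem : ∀ (a : B) {i : B}, i ∈ annSeries B k → lam a i ∈ annSeries B k
  mul_mem : ∀ {u v : B}, u ∈ annSeries B k → v ∈ annSeries B k → u * v ∈ annSeries B k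
  inv_mem : ∀ {u : B}, u ∈ annSeries B k → u⁻¹ ∈ annSeries B k
  mono : annSeries B k ⊆ annSeries B (k + 1)

theorem annGood (B : Type*) [SkewBrace B] : ∀ k, AnnGood B k := by
  intro k
  induction k with
  | zero =>
    have hz : ∀ {x : B}, x ∈ annSeries B 0 → x = 0 := fun hx => mem_annSeries_zero.mp hx
    have hz' : (0 : B) ∈ annSeries B 0 := mem_annSeries_zero.mpr rfl
    have h1 : (0 : B) ∈ annSeries B 1 := by
      rw [mem_annSeries_succ]
      intro a
      simp [zero_mul'', mul_zero'', hz']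
    refine ⟨⟨hz', ?_, ?_, ?_⟩, ?_, ?_, ?_, ?_⟩
    · intro u v hu hv; rw [hz hu, hz hv]; simpa using hz'
    · intro u hu; rw [hz hu]; simpa using hz'
    · intro a u hu; rw [hz hu]; simpa using hz'
    · intro a i hi; rw [hz hi, lam_zero]; exact hz'
    · intro u v hu hv; rw [hz hu, hz hv, zero_mul'']; exact hz'
    · intro u hu; rw [hz hu, ← one_eq_zero, inv_one, one_eq_zero]; exact hz'
    · intro x hx; rw [hz hx]; exact h1
  | succ k ih =>
    have hI := ih.ni
    have hIJ : annSeries B k ⊆ annSeries B (k+1) := ih.mono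
    -- congruence for left multiplication
    have mdL : ∀ (c : B) {u v : B}, u - v ∈ annSeries B k →
        c * u - c * v ∈ annSeries B k := by
      intro c u v huv
      have h1 : c * ((u - v) + v) = c * (u - v) - c + c * v := circ_add c (u - v) v
      rw [sub_add_cancel] at h1
      have e : c * u = (c + lam c (u - v) - c) + c * v := by
        rw [h1, ← add_lam c (u - v)]
      exact hI.of_eq_add (hI.conj c (ih.lam_mem c huv)) e
    -- x*a ≡ x + a for x ∈ J, combining cond1 and cond2
    have t12 : ∀ {x : B}, x ∈ annSeries B (k+1) → ∀ (a : B),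
        a * x - (x + a) ∈ annSeries B k := by
      intro x hx a
      exact hI.trans (hI.symm (cond1 hx a)) (cond2 hx a)
    -- multiplicative closure
    have mulJ : ∀ {x z : B}, x ∈ annSeries B (k+1) → z ∈ annSeries B (k+1) →
        x * z ∈ annSeries B (k+1) := by
      intro x z hx hz
      rw [mem_annSeries_succ]
      intro a
      have hA : (x * z) * a - (x + z + a) ∈ annSeries B k := by
        have s1 : x * (z * a) - x * (z + a) ∈ annSeries B k := mdL x (cond2 hz a)
        have e1 : x * (z + a) = (x * z - x) + x * a := by
          rw [circ_add]
        have s2 : ((x * z - x) + x * a) - ((x * z - x) + (x + a)) ∈ annSeries B k :=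
          hI.addL _ (cond2 hx a)
        have e2 : (x * z - x) + (x + a) = x * z + a := by
          simp [sub_eq_add_neg, add_assoc]
        have s3 : (x * z + a) - ((x + z) + a) ∈ annSeries B k := hI.addR a (cond2 hx z)
        rw [mul_assoc]
        refine hI.trans s1 ?_
        rw [e1]
        refine hI.trans s2 ?_
        rw [e2]
        exact s3
      have hB : a * (x * z) - (x + z + a) ∈ annSeries B k := by
        have s1 : a * (x * z) - a * (x + z) ∈ annSeries B k := mdL a (cond2 hx z)
        have e1 : a * (x + z) = (a * x - a) + a * z := by
          rw [circ_add]
        have s2 : ((a * x) + -a) - ((x + a) + -a) ∈ annSeries B k := hI.addR (-a) (t12 hx a)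
        have s2'' : (a * x - a) - x ∈ annSeries B k := by
          have e : ((a * x) + -a) - ((x + a) + -a) = (a * x - a) - x := by
            simp [sub_eq_add_neg, add_assoc]
          rwa [e] at s2
        have s2' : ((a * x - a) + a * z) - (x + a * z) ∈ annSeries B k := hI.addR (a * z) s2''
        have s3 : (x + a * z) - (x + (z + a)) ∈ annSeries B k := hI.addL x (t12 hz a)
        have e3 : x + (z + a) = x + z + a := (add_assoc x z a).symm
        refine hI.trans s1 ?_
        rw [e1]
        refine hI.trans s2' ?_
        rw [← e3]
        exact s3
      have hC : (x * z + a) - (x + z + a) ∈ annSeries B k := hI.addR a (cond2 hx z)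
      have hD : (a + x * z) - (x + z + a) ∈ annSeries B k := by
        have s1 : (a + x * z) - (a + (x + z)) ∈ annSeries B k := hI.addL a (cond2 hx z)
        have s2 : ((a + x) + z) - ((x + a) + z) ∈ annSeries B k :=
          hI.addR z (hI.symm (cond3 hx a))
        have s3 : (x + (a + z)) - (x + (z + a)) ∈ annSeries B k :=
          hI.addL x (hI.symm (cond3 hz a))
        have e1 : a + (x + z) = (a + x) + z := (add_assoc a x z).symm
        have e2 : (x + a) + z = x + (a + z) := add_assoc x a z
        have e3 : x + (z + a) = x + z + a := (add_assoc x z a).symm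
        refine hI.trans s1 ?_
        rw [e1]
        refine hI.trans s2 ?_
        rw [e2]
        rw [e3] at s3
        exact s3
      exact ⟨hI.trans hA (hI.symm hB), hI.trans hA (hI.symm hC),
        hI.trans hC (hI.symm hD)⟩
    -- inverse closure
    have invJ : ∀ {x : B}, x ∈ annSeries B (k+1) → x⁻¹ ∈ annSeries B (k+1) := by
      intro x hx
      have h0 := cond2 hx x⁻¹
      rw [mul_inv_cancel, one_eq_zero, zero_sub] at h0
      have hxiv : x + x⁻¹ ∈ annSeries B k := by simpa using hI.neg h0
      have md1 : x⁻¹ - (-x) ∈ annSeries B k := by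
        have h1 := hI.conj' x hxiv
        have e : -x + (x + x⁻¹) + x = x⁻¹ - (-x) := by
          simp [sub_eq_add_neg, add_assoc]
        rwa [e] at h1
      rw [mem_annSeries_succ]
      intro a
      -- x⁻¹ * a ≡ -x + a
      have k3 : x⁻¹ * a - (-x + a) ∈ annSeries B k := by
        have k1 := cond2 hx (x⁻¹ * a)
        rw [← mul_assoc, mul_inv_cancel, one_mul] at k1
        have k2 := hI.addL (-x) k1
        have e : -x + (x + x⁻¹ * a) = x⁻¹ * a := neg_add_cancel_left x _
        rw [e] at k2
        exact hI.symm k2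
      have c2goal : x⁻¹ * a - (x⁻¹ + a) ∈ annSeries B k := by
        refine hI.trans k3 ?_
        exact hI.addR a (hI.symm md1)
      have c1goal : x⁻¹ * a - a * x⁻¹ ∈ annSeries B k := by
        -- a * x⁻¹ ≡ -x + a as well
        have l1 : lam a x⁻¹ - lam a (-x) ∈ annSeries B k := by
          have := ih.lam_mem a md1
          rwa [lam_sub] at this
        have l2 : (a + lam a x⁻¹) - (a + lam a (-x)) ∈ annSeries B k := hI.addL a l1
        rw [add_lam] at l2
        have e1 : a + lam a (-x) = a - a * x + a := by
          rw [lam_neg]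
          simp [lam, sub_eq_add_neg, add_assoc]
        rw [e1] at l2
        have l3 : (a - a * x + a) - (-x + a) ∈ annSeries B k := by
          have m1 := hI.negc (t12 hx a)
          have m2 := hI.addL a m1
          have m3 := hI.addR a m2
          have e : (a + -(a * x) + a) - (a + -(x + a) + a) = (a - a * x + a) - (-x + a) := by
            simp [sub_eq_add_neg, neg_add_rev, add_assoc]
          rwa [e] at m3
        exact hI.trans k3 (hI.symm (hI.trans l2 l3))
      have c3goal : (x⁻¹ + a) - (a + x⁻¹) ∈ annSeries B k := by
        have m1 : (x⁻¹ + a) - (-x + a) ∈ annSeries B k := hI.addR a md1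
        have m2 : (a + x⁻¹) - (a + -x) ∈ annSeries B k := hI.addL a md1
        have m3 : (-x + a) - (a + -x) ∈ annSeries B k := by
          have := comm_mem' hI hx a
          have e : -x + a + x - a = (-x + a) - (a + -x) := by
            simp [sub_eq_add_neg, add_assoc]
          rwa [e] at this
        exact hI.trans m1 (hI.trans m3 (hI.symm m2))
      exact ⟨c1goal, c2goal, c3goal⟩
    -- additive absorption of I on the right
    have addIR : ∀ {z i : B}, z ∈ annSeries B (k+1) → i ∈ annSeries B k →
        z + i ∈ annSeries B (k+1) := by
      intro z i hz hi
      rw [add_eq_mul_lam z i]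
      exact mulJ hz (hIJ (ih.lam_mem z⁻¹ hi))
    have addIL : ∀ {z i : B}, z ∈ annSeries B (k+1) → i ∈ annSeries B k →
        i + z ∈ annSeries B (k+1) := by
      intro z i hz hi
      have e : i + z = z + (-z + i + z) := by simp [add_assoc]
      rw [e]
      exact addIR hz (hI.conj' z hi)
    have addJ : ∀ {u v : B}, u ∈ annSeries B (k+1) → v ∈ annSeries B (k+1) →
        u + v ∈ annSeries B (k+1) := by
      intro u v hu hv
      have hst : starOp u⁻¹ v ∈ annSeries B k := starR hI hv u⁻¹
      have hlam : lam u⁻¹ v ∈ annSeries B (k+1) := by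
        rw [lam_eq_star]
        exact addIL hv hst
      rw [add_eq_mul_lam u v]
      exact mulJ hu hlam
    have negJ : ∀ {u : B}, u ∈ annSeries B (k+1) → -u ∈ annSeries B (k+1) := by
      intro u hu
      have h0 := cond2 hu u⁻¹
      rw [mul_inv_cancel, one_eq_zero, zero_sub] at h0
      have e : -u = u⁻¹ + (-(u + u⁻¹)) := by simp [add_assoc]
      rw [e]
      exact addIR (invJ hu) h0
    have zeroJ : (0 : B) ∈ annSeries B (k+1) := by
      rw [mem_annSeries_succ]
      intro a
      simp [zero_mul'', mul_zero'', hI.zero]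
    have conjJ : ∀ (a : B) {x : B}, x ∈ annSeries B (k+1) →
        a + x - a ∈ annSeries B (k+1) := by
      intro a x hx
      have e : a + x - a = x + (-x + a + x - a) := by
        simp [sub_eq_add_neg, add_assoc]
      rw [e]
      exact addIR hx (comm_mem' hI hx a)
    have lamJ : ∀ (a : B) {x : B}, x ∈ annSeries B (k+1) →
        lam a x ∈ annSeries B (k+1) := by
      intro a x hx
      rw [lam_eq_star]
      exact addIL hx (starR hI hx a)
    have monoJ : annSeries B (k+1) ⊆ annSeries B (k+2) := by
      intro x hx
      rw [mem_annSeries_succ]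
      intro a
      exact ⟨hIJ (cond1 hx a), hIJ (cond2 hx a), hIJ (cond3 hx a)⟩
    exact ⟨⟨zeroJ, addJ, negJ, conjJ⟩, lamJ, mulJ, invJ, monoJ⟩

universe u

open scoped commutatorElement

abbrev lowerCentralSeries (G : Type*) [Group G] (n : ℕ) : Subgroup G :=
  (⊤ : Subgroup G).lowerCentralSeries n

theorem lowerCentralSeries_zero {G : Type*} [Group G] : lowerCentralSeries G 0 = ⊤ := rfl

theorem lowerCentralSeries_succ {G : Type*} [Group G] (n : ℕ) :
    lowerCentralSeries G (n + 1) =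
      Subgroup.closure { x | ∃ p ∈ lowerCentralSeries G n, ∃ q ∈ (⊤ : Subgroup G), ⁅p, q⁆ = x } :=
  rfl

theorem lowerCentralSeries_map_subtype_le {G : Type*} [Group G] (H : Subgroup G) (n : ℕ) :
    (lowerCentralSeries H n).map H.subtype ≤ lowerCentralSeries G n :=
  Subgroup.lowerCentralSeries_map_subtype_le H n

theorem lcs_succ_comm (G : Type u) [Group G] (n : ℕ) :
    lowerCentralSeries G (n+1) = ⁅lowerCentralSeries G n, (⊤ : Subgroup G)⁆ := by
  rw [Subgroup.commutator_def, lowerCentralSeries_succ]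

theorem torsion_of_gen_torsion :
    ∀ (n : ℕ) (G : Type u) [Group G], lowerCentralSeries G n = ⊥ →
      (∀ g : G, g ∈ Subgroup.closure {h : G | IsOfFinOrder h}) → ∀ x : G, IsOfFinOrder x := by
  intro n
  induction n with
  | zero =>
    intro G _ hbot _ x
    have hx : x ∈ lowerCentralSeries G 0 := by
      rw [lowerCentralSeries_zero]; exact Subgroup.mem_top x
    rw [hbot, Subgroup.mem_bot] at hx
    rw [hx]; exact IsOfFinOrder.one
  | succ n ih =>
    intro G _ hbot hgen x
    match n, ih, hbot with
    | 0, _, hbot =>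
      -- G is abelian
      have hcomm : ∀ a b : G, a * b = b * a := by
        intro a b
        have h1 : ⁅a, b⁆ ∈ lowerCentralSeries G 1 := by
          rw [lcs_succ_comm]
          exact Subgroup.commutator_mem_commutator
            (by rw [lowerCentralSeries_zero]; exact Subgroup.mem_top a) (Subgroup.mem_top b)
        rw [hbot, Subgroup.mem_bot] at h1
        exact commutatorElement_eq_one_iff_mul_comm.mp h1
      refine Subgroup.closure_induction (fun y hy => hy) IsOfFinOrder.one
        (fun a b _ _ ha hb => Commute.isOfFinOrder_mul (hcomm a b) ha hb)
        (fun a _ ha => ha.inv) (hgen x)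
    | (m+1), ih, hbot =>
      set N := lowerCentralSeries G (m+1) with hN
      have hNle : N ≤ Subgroup.center G := by
        have h1 : ⁅N, (⊤ : Subgroup G)⁆ = ⊥ := by
          rw [hN, ← lcs_succ_comm]; exact hbot
        have h2 := Subgroup.commutator_eq_bot_iff_le_centralizer.mp h1
        rwa [Subgroup.coe_top, Subgroup.centralizer_univ] at h2
      -- the set of central torsion elements
      set S : Set G := {z : G | IsOfFinOrder z ∧ z ∈ Subgroup.center G} with hS
      have hSc : Subgroup.closure S ≤ Subgroup.center G :=
        (Subgroup.closure_le _).mpr (fun z hz => hz.2)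
      have hSt : ∀ z ∈ Subgroup.closure S, IsOfFinOrder z := by
        intro z hz
        refine Subgroup.closure_induction (p := fun w _ => IsOfFinOrder w)
          (fun y hy => hy.1) IsOfFinOrder.one ?_ (fun a _ ha => ha.inv) hz
        intro a b hab _ ha hb
        have hcom : Commute a b := ((Subgroup.mem_center_iff.mp (hSc hab)) b).symm
        exact Commute.isOfFinOrder_mul hcom ha hb
      have hNt : ∀ z ∈ N, IsOfFinOrder z := by
        have hNle' : N ≤ Subgroup.closure S := by
          rw [hN, lcs_succ_comm, Subgroup.commutator_le]
          intro p hp q _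
          have hcent : ∀ g : G, ⁅p, g⁆ ∈ Subgroup.center G := by
            intro g
            refine hNle ?_
            rw [hN, lcs_succ_comm]
            exact Subgroup.commutator_mem_commutator hp (Subgroup.mem_top g)
          have hhom : ∀ a b : G, ⁅p, a * b⁆ = ⁅p, a⁆ * ⁅p, b⁆ := by
            intro a b
            have h1 : ⁅p, a * b⁆ = ⁅p, a⁆ * (a * ⁅p, b⁆ * a⁻¹) := by
              simp only [commutatorElement_def]
              group
            rw [h1, (Subgroup.mem_center_iff.mp (hcent b) a),
              mul_assoc, mul_inv_cancel, mul_one]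
          set φ : G →* G := MonoidHom.mk' (fun g => ⁅p, g⁆) hhom with hφ
          have h2 : φ q ∈ Subgroup.map φ (Subgroup.closure {h : G | IsOfFinOrder h}) :=
            Subgroup.mem_map_of_mem φ (hgen q)
          rw [MonoidHom.map_closure] at h2
          have h3 : Subgroup.closure (φ '' {h : G | IsOfFinOrder h}) ≤ Subgroup.closure S := by
            apply Subgroup.closure_mono
            rintro _ ⟨t, ht, rfl⟩
            exact ⟨φ.isOfFinOrder ht, hcent t⟩
          exact h3 h2
        exact fun z hz => hSt z (hNle' hz)
      -- quotient
      haveI : N.Normal := by rw [hN]; infer_instance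
      have hmap : ∀ j : ℕ, Subgroup.map (QuotientGroup.mk' N) (lowerCentralSeries G j) =
          lowerCentralSeries (G ⧸ N) j := by
        intro j
        induction j with
        | zero =>
          rw [lowerCentralSeries_zero, lowerCentralSeries_zero]
          exact Subgroup.map_top_of_surjective _ (QuotientGroup.mk'_surjective N)
        | succ j ihj =>
          rw [lcs_succ_comm, lcs_succ_comm, Subgroup.map_commutator,
            ihj, Subgroup.map_top_of_surjective _ (QuotientGroup.mk'_surjective N)]
      have hQbot : lowerCentralSeries (G ⧸ N) (m+1) = ⊥ := by
        rw [← hmap (m+1), ← hN, (Subgroup.map_eq_bot_iff _).mpr]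
        rw [QuotientGroup.ker_mk']
      have hQgen : ∀ q : G ⧸ N, q ∈ Subgroup.closure {h : G ⧸ N | IsOfFinOrder h} := by
        intro q
        obtain ⟨g, rfl⟩ := QuotientGroup.mk'_surjective N q
        have h2 : (QuotientGroup.mk' N) g ∈
            Subgroup.map (QuotientGroup.mk' N) (Subgroup.closure {h : G | IsOfFinOrder h}) :=
          Subgroup.mem_map_of_mem _ (hgen g)
        rw [MonoidHom.map_closure] at h2
        refine Subgroup.closure_mono ?_ h2
        rintro _ ⟨t, ht, rfl⟩
        exact (QuotientGroup.mk' N).isOfFinOrder ht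
      have hq : IsOfFinOrder ((QuotientGroup.mk' N) x) := ih (G ⧸ N) hQbot hQgen _
      obtain ⟨r, hr, hr1⟩ := isOfFinOrder_iff_pow_eq_one.mp hq
      rw [← map_pow, QuotientGroup.mk'_apply, QuotientGroup.eq_one_iff] at hr1
      obtain ⟨s, hs, hs1⟩ := isOfFinOrder_iff_pow_eq_one.mp (hNt _ hr1)
      rw [← pow_mul] at hs1
      exact isOfFinOrder_iff_pow_eq_one.mpr ⟨r * s, Nat.mul_pos hr hs, hs1⟩

theorem torsion_mul_closed {G : Type u} [Group G] {n : ℕ}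
    (h : lowerCentralSeries G n = ⊥) {x y : G}
    (hx : IsOfFinOrder x) (hy : IsOfFinOrder y) : IsOfFinOrder (x * y) := by
  set H := Subgroup.closure {g : G | IsOfFinOrder g} with hH
  have h1 : lowerCentralSeries H n = ⊥ := by
    have h2 := lowerCentralSeries_map_subtype_le H n
    rw [h] at h2
    rw [eq_bot_iff]
    intro z hz
    have h3 : (z : G) ∈ (⊥ : Subgroup G) := h2 (Subgroup.mem_map_of_mem _ hz)
    rw [Subgroup.mem_bot] at h3
    rw [Subgroup.mem_bot]
    exact Subtype.ext h3
  have hcoe : ∀ (w : G) (hw : w ∈ H), IsOfFinOrder w → IsOfFinOrder (⟨w, hw⟩ : H) := by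
    intro w hw hwf
    obtain ⟨r, hr, hr1⟩ := isOfFinOrder_iff_pow_eq_one.mp hwf
    refine isOfFinOrder_iff_pow_eq_one.mpr ⟨r, hr, ?_⟩
    ext
    simpa using hr1
  have hgen : ∀ g : H, g ∈ Subgroup.closure {h : H | IsOfFinOrder h} := by
    rintro ⟨g, hg⟩
    refine Subgroup.closure_induction
      (p := fun w hw => (⟨w, hw⟩ : H) ∈ Subgroup.closure {h : H | IsOfFinOrder h})
      ?_ ?_ ?_ ?_ hg
    · intro t ht
      have : t ∈ H := Subgroup.subset_closure ht
      exact Subgroup.subset_closure (hcoe t _ ht)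
    · exact Subgroup.subset_closure (hcoe 1 (one_mem H) IsOfFinOrder.one)
    · intro a b ha hb hpa hpb
      exact Subgroup.mul_mem _ hpa hpb
    · intro a ha hpa
      exact Subgroup.inv_mem _ hpa
  have hxy : x * y ∈ H :=
    Subgroup.mul_mem _ (Subgroup.subset_closure hx) (Subgroup.subset_closure hy)
  have := torsion_of_gen_torsion n H h1 hgen ⟨x * y, hxy⟩
  obtain ⟨r, hr, hr1⟩ := isOfFinOrder_iff_pow_eq_one.mp this
  refine isOfFinOrder_iff_pow_eq_one.mpr ⟨r, hr, ?_⟩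
  have := congrArg (Subtype.val) hr1
  simpa using this


section TorsionLemmas

variable {A : Type*} [SkewBrace A]

lemma fin_add_map (f : A →+ A) {x : A} (h : IsOfFinAddOrder x) : IsOfFinAddOrder (f x) := by
  obtain ⟨m, hm, h0⟩ := isOfFinAddOrder_iff_nsmul_eq_zero.mp h
  exact isOfFinAddOrder_iff_nsmul_eq_zero.mpr
    ⟨m, hm, by rw [← AddMonoidHom.map_nsmul, h0, map_zero]⟩

lemma fin_add_of_nsmul {x : A} {k : ℕ} (hk : 0 < k) (h : IsOfFinAddOrder (k • x)) :
    IsOfFinAddOrder x := by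
  obtain ⟨m, hm, hm0⟩ := isOfFinAddOrder_iff_nsmul_eq_zero.mp h
  refine isOfFinAddOrder_iff_nsmul_eq_zero.mpr ⟨k * m, Nat.mul_pos hk hm, ?_⟩
  rw [mul_nsmul, hm0]

def conjAddHom (a : A) : A →+ A :=
  AddMonoidHom.mk' (fun z => a + z - a) (by
    intro u v
    simp [sub_eq_add_neg, add_assoc])

def annMulSub (A : Type*) [SkewBrace A] (k : ℕ) : Subgroup (Multiplicative A) where
  carrier := {g | Multiplicative.toAdd g ∈ annSeries A k}
  one_mem' := (annGood A k).ni.zero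
  mul_mem' := fun ha hb => (annGood A k).ni.add ha hb
  inv_mem' := fun ha => (annGood A k).ni.neg ha

lemma mem_annMulSub {k : ℕ} {g : Multiplicative A} :
    g ∈ annMulSub A k ↔ Multiplicative.toAdd g ∈ annSeries A k := Iff.rfl

lemma lcs_bot {n : ℕ} (hn : annSeries A n = Set.univ) :
    lowerCentralSeries (Multiplicative A) n = ⊥ := by
  have key : ∀ j : ℕ, j ≤ n →
      lowerCentralSeries (Multiplicative A) j ≤ annMulSub A (n - j) := by
    intro j
    induction j with
    | zero =>
      intro _
      rw [lowerCentralSeries_zero]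
      intro g _
      rw [mem_annMulSub, Nat.sub_zero, hn]
      trivial
    | succ j ihj =>
      intro hj
      rw [lcs_succ_comm, Subgroup.commutator_le]
      intro g₁ hg₁ g₂ _
      have h1 : Multiplicative.toAdd g₁ ∈ annSeries A ((n - (j+1)) + 1) := by
        have e : (n - (j+1)) + 1 = n - j := by omega
        rw [e]
        exact ihj (Nat.le_of_succ_le hj) hg₁
      have h2 := comm_mem (annGood A (n - (j+1))).ni h1 (Multiplicative.toAdd g₂)
      rw [mem_annMulSub]
      have e : Multiplicative.toAdd ⁅g₁, g₂⁆ =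
          Multiplicative.toAdd g₁ + Multiplicative.toAdd g₂ -
            Multiplicative.toAdd g₁ - Multiplicative.toAdd g₂ := by
        simp [commutatorElement_def, sub_eq_add_neg]
      rw [e]
      exact h2
  have h0 := key n le_rfl
  rw [Nat.sub_self] at h0
  rw [eq_bot_iff]
  intro g hg
  have h1 := h0 hg
  rw [mem_annMulSub, mem_annSeries_zero] at h1
  rw [Subgroup.mem_bot]
  have := congrArg Multiplicative.ofAdd h1
  simpa using this

lemma T_add (hann : AnnNilpotent A) {x y : A} (hx : IsOfFinAddOrder x)
    (hy : IsOfFinAddOrder y) : IsOfFinAddOrder (x + y) := by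
  obtain ⟨n, hn⟩ := hann
  have hbot := lcs_bot hn
  have h1 : IsOfFinOrder (Multiplicative.ofAdd x) := isOfFinOrder_ofAdd_iff.mpr hx
  have h2 : IsOfFinOrder (Multiplicative.ofAdd y) := isOfFinOrder_ofAdd_iff.mpr hy
  have h3 := torsion_mul_closed hbot h1 h2
  rw [← ofAdd_add] at h3
  exact isOfFinOrder_ofAdd_iff.mp h3

lemma T_lam (a : A) {x : A} (hx : IsOfFinAddOrder x) : IsOfFinAddOrder (lam a x) :=
  fin_add_map (lamHom a) hx

lemma T_mul (hann : AnnNilpotent A) {x y : A} (hx : IsOfFinAddOrder x)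
    (hy : IsOfFinAddOrder y) : IsOfFinAddOrder (x * y) := by
  rw [← add_lam]
  exact T_add hann hx (T_lam x hy)

lemma fin_mul_of_fin_add (hann : AnnNilpotent A) :
    ∀ {x : A}, IsOfFinAddOrder x → IsOfFinOrder x := by
  obtain ⟨n, hn⟩ := id hann
  suffices h : ∀ (k : ℕ) (x : A), x ∈ annSeries A k → IsOfFinAddOrder x → IsOfFinOrder x by
    intro x hx
    exact h n x (by rw [hn]; trivial) hx
  intro k
  induction k with
  | zero =>
    intro x hx _
    rw [mem_annSeries_zero.mp hx, ← one_eq_zero]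
    exact IsOfFinOrder.one
  | succ k ih =>
    intro x hx hxT
    obtain ⟨m, hm, hm0⟩ := isOfFinAddOrder_iff_nsmul_eq_zero.mp hxT
    have key : ∀ j : ℕ, ∃ e ∈ annSeries A k, x ^ j = e + j • x := by
      intro j
      induction j with
      | zero => exact ⟨0, (annGood A k).ni.zero, by simp [one_eq_zero]⟩
      | succ j ihj =>
        obtain ⟨e, he, hej⟩ := ihj
        refine ⟨x + (starOp x (x ^ j) + e) - x,
          (annGood A k).ni.conj x
            ((annGood A k).ni.add (starL (annGood A k).ni hx (x ^ j)) he), ?_⟩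
        rw [pow_succ', mul_eq_add_star, hej, succ_nsmul']
        simp [sub_eq_add_neg, add_assoc]
    obtain ⟨e, he, hem⟩ := key m
    rw [hm0, add_zero] at hem
    have hpowT : ∀ j : ℕ, IsOfFinAddOrder (x ^ j) := by
      intro j
      induction j with
      | zero =>
        rw [pow_zero, one_eq_zero]
        exact IsOfFinAddOrder.zero
      | succ j ihj =>
        rw [pow_succ']
        exact T_mul hann hxT ihj
    have hxm : IsOfFinOrder (x ^ m) := ih (x ^ m) (by rw [hem]; exact he) (hpowT m)
    obtain ⟨r, hr, hr1⟩ := isOfFinOrder_iff_pow_eq_one.mp hxm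
    rw [← pow_mul] at hr1
    exact isOfFinOrder_iff_pow_eq_one.mpr ⟨m * r, Nat.mul_pos hm hr, hr1⟩

lemma star_fin_add (hann : AnnNilpotent A) {w : A} (hw : IsOfFinOrder w) (b : A) :
    IsOfFinAddOrder (starOp w b) := by
  obtain ⟨n, hn⟩ := id hann
  suffices h : ∀ (k : ℕ) (w b : A), IsOfFinOrder w → starOp w b ∈ annSeries A k →
      IsOfFinAddOrder (starOp w b) by
    exact h n w b hw (by rw [hn]; trivial)
  intro k
  induction k with
  | zero =>
    intro w b _ hmem
    rw [mem_annSeries_zero.mp hmem]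
    exact IsOfFinAddOrder.zero
  | succ k ih =>
    intro w b hw hmem
    obtain ⟨r, hr, hr1⟩ := isOfFinOrder_iff_pow_eq_one.mp hw
    have key : ∀ j : ℕ, starOp (w ^ j) b ∈ annSeries A (k+1) ∧
        ∃ f : A, IsOfFinAddOrder f ∧ starOp (w ^ j) b = f + j • starOp w b := by
      intro j
      induction j with
      | zero =>
        constructor
        · rw [pow_zero, star_one_left]
          exact (annGood A (k+1)).ni.zero
        · exact ⟨0, IsOfFinAddOrder.zero, by rw [pow_zero, star_one_left]; simp⟩
      | succ j ihj =>
        obtain ⟨hPj, f, hfT, hfeq⟩ := ihj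
        have hq : starOp w (starOp (w ^ j) b) ∈ annSeries A k :=
          starR (annGood A k).ni hPj w
        have hqT : IsOfFinAddOrder (starOp w (starOp (w ^ j) b)) := ih w _ hw hq
        have heq2 : starOp (w ^ (j+1)) b =
            (starOp w (starOp (w ^ j) b) + starOp (w ^ j) b) + starOp w b := by
          rw [pow_succ', star_mul_left, lam_eq_star]
        constructor
        · rw [heq2]
          exact (annGood A (k+1)).ni.add
            ((annGood A (k+1)).ni.add ((annGood A k).mono hq) hPj) hmem
        · refine ⟨starOp w (starOp (w ^ j) b) + f, T_add hann hqT hfT, ?_⟩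
          rw [heq2, hfeq, succ_nsmul]
          simp [add_assoc]
    obtain ⟨_, f, hfT, hfeq⟩ := key r
    rw [hr1, star_one_left] at hfeq
    have h2 : -f = r • starOp w b := neg_eq_of_add_eq_zero_right hfeq.symm
    have h3 : IsOfFinAddOrder (r • starOp w b) := by rw [← h2]; exact hfT.neg
    exact fin_add_of_nsmul hr h3

end TorsionLemmas


/-- Proposition 4.2(2,3): in an annihilator nilpotent skew brace `A`, the set
`T₊(A)` of elements of finite additive order is an ideal of `A`, and the
quotient `A/T₊(A)` has no nonzero element of finite additive order (i.e. any
`x` whose coset has finite additive order already lies in `T₊(A)`). -/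
theorem stmt12 {A : Type*} [SkewBrace A] (hann : AnnNilpotent A) :
    IsIdeal {x : A | IsOfFinAddOrder x} ∧
    ∀ x : A, (∃ k : ℕ, 0 < k ∧ k • x ∈ {x : A | IsOfFinAddOrder x}) →
      IsOfFinAddOrder x := by
  constructor
  · refine ⟨⟨?_, ?_, ?_, ?_, ?_⟩, ?_, ?_, ?_⟩
    · exact IsOfFinAddOrder.zero
    · intro a ha b hb
      exact T_add hann ha hb
    · intro a ha
      exact ha.neg
    · intro a ha b hb
      exact T_mul hann ha hb
    · intro a ha
      have e : a⁻¹ = lam a⁻¹ (-a) := inv_eq_lam a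
      show IsOfFinAddOrder a⁻¹
      rw [e]
      exact T_lam a⁻¹ ha.neg
    · intro a i hi
      show IsOfFinAddOrder (a + i - a)
      exact fin_add_map (conjAddHom a) hi
    · intro a i hi
      show IsOfFinAddOrder (a * i * a⁻¹)
      rw [conj_circ]
      refine fin_add_map (conjAddHom a) ?_
      exact T_add hann (T_lam a hi)
        (T_lam a (star_fin_add hann (fin_mul_of_fin_add hann hi) a⁻¹))
    · intro a i hi
      exact T_lam a hi
  · rintro x ⟨k, hk, hkx⟩
    exact fin_add_of_nsmul hk hkx

end SkewBrace
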